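/- Let A be a positive definite real n×n matrix and Π a real m×n matrix such that A_loc = Π * A * Πᵀ is invertible, and let P = Πᵀ * A_loc⁻¹ * Π * A. Then the error propagation factor 1 − P is non-expansive in the energy norm: for every v ∈ ℝⁿ, ((1 − P) *ᵥ v) ⬝ᵥ (A *ᵥ ((1 − P) *ᵥ v)) ≤ v ⬝ᵥ (A *ᵥ v). -/

import Mathlib

open Matrix

lemma conj_dot {n k : ℕ} (A : Matrix (Fin k) (Fin k) ℝ) (M : Matrix (Fin k) (Fin n) ℝ)
    (v : Fin n → ℝ) :
    (M *ᵥ v) ⬝ᵥ (A *ᵥ (M *ᵥ v)) = v ⬝ᵥ ((Mᵀ * A * M) *ᵥ v) := by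
  conv_rhs => rw [← mulVec_mulVec, ← mulVec_mulVec, Matrix.dotProduct_mulVec, vecMul_transpose]

/-- With the exact local solver (`A_loc = Π * A * Πᵀ` invertible), the error
propagation factor `1 − P` with `P = Πᵀ * A_loc⁻¹ * Π * A` is non-expansive in
the energy norm of a positive definite `A`: for every `v`,
`((1 − P) *ᵥ v) ⬝ᵥ (A *ᵥ ((1 − P) *ᵥ v)) ≤ v ⬝ᵥ (A *ᵥ v)`. -/
theorem error_propagation_nonexpansive_energy_norm
    {n m : ℕ} (A : Matrix (Fin n) (Fin n) ℝ) (hA : A.PosDef)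
    (Pr : Matrix (Fin m) (Fin n) ℝ)
    (hloc : IsUnit (Pr * A * Prᵀ).det)
    (v : Fin n → ℝ) :
    (((1 : Matrix (Fin n) (Fin n) ℝ) - Prᵀ * (Pr * A * Prᵀ)⁻¹ * Pr * A).mulVec v) ⬝ᵥ
        (A.mulVec (((1 : Matrix (Fin n) (Fin n) ℝ) -
          Prᵀ * (Pr * A * Prᵀ)⁻¹ * Pr * A).mulVec v)) ≤
      v ⬝ᵥ A.mulVec v := by
  set B := Pr * A * Prᵀ with hBdef
  have hAsymm : Aᵀ = A := hA.isHermitian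
  have hBsymm : Bᵀ = B := by
    rw [hBdef, transpose_mul, transpose_mul, transpose_transpose, hAsymm, Matrix.mul_assoc]
  have hconj : ∀ {a b : ℕ} (C : Matrix (Fin a) (Fin b) ℝ), Cᴴ = Cᵀ := fun C => by
    ext i j; simp [conjTranspose]
  have hBinvsymm : (B⁻¹)ᵀ = B⁻¹ := by rw [transpose_nonsing_inv, hBsymm]
  have hBinvB : B⁻¹ * B = 1 := nonsing_inv_mul B hloc
  have hBpsd : B.PosSemidef := by
    have h := hA.posSemidef.mul_mul_conjTranspose_same Pr
    rw [hconj] at h; exact h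
  have hBinvpsd : (B⁻¹).PosSemidef := by
    have h2 := hBpsd.mul_mul_conjTranspose_same B⁻¹
    rwa [hconj, hBinvsymm, Matrix.mul_assoc, mul_nonsing_inv B hloc, Matrix.mul_one] at h2
  set M := Prᵀ * B⁻¹ * Pr * A with hMdef
  have hMtA : Mᵀ * A = A * M := by
    rw [hMdef, transpose_mul, transpose_mul, transpose_mul, hAsymm, transpose_transpose,
      hBinvsymm]
    simp [Matrix.mul_assoc]
  have hAMM : (A * M) * M = A * M := by
    have h : M * M = M := by
      rw [hMdef]
      calc Prᵀ * B⁻¹ * Pr * A * (Prᵀ * B⁻¹ * Pr * A)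
          = Prᵀ * B⁻¹ * (Pr * A * Prᵀ) * (B⁻¹ * (Pr * A)) := by simp [Matrix.mul_assoc]
        _ = Prᵀ * (B⁻¹ * B) * (B⁻¹ * (Pr * A)) := by rw [← hBdef]; simp [Matrix.mul_assoc]
        _ = Prᵀ * B⁻¹ * Pr * A := by rw [hBinvB]; simp [Matrix.mul_assoc]
    rw [Matrix.mul_assoc, h]
  have key : ((1 : Matrix (Fin n) (Fin n) ℝ) - M)ᵀ * A * (1 - M) = A - A * M := by
    rw [transpose_sub, transpose_one, Matrix.sub_mul, Matrix.sub_mul, Matrix.mul_sub,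
      Matrix.mul_sub, Matrix.one_mul]
    simp only [Matrix.mul_one]
    rw [hMtA, hAMM]
    abel
  rw [conj_dot, key, Matrix.sub_mulVec, dotProduct_sub]
  have hnonneg : 0 ≤ v ⬝ᵥ ((A * M) *ᵥ v) := by
    have hAM : A * M = (Pr * A)ᵀ * B⁻¹ * (Pr * A) := by
      rw [hMdef, transpose_mul, hAsymm]; simp [Matrix.mul_assoc]
    have h3 := hBinvpsd.dotProduct_mulVec_nonneg ((Pr * A) *ᵥ v)
    rw [hAM, ← conj_dot]
    simpa using h3
  linarith
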